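/- If p ∈ K⟨n⟩ is homogeneous of degree m ≥ 1 and C p = 0, then p is a linear combination of differences of the form X_{i_1}⋯X_{i_m} − X_{i_2}⋯X_{i_m}X_{i_1} (differences of a monomial and a cyclic permutation of it). -/

import Mathlib

/-! Setup: the free associative algebra `K⟨X_1,…,X_n⟩` realized as the monoid
algebra of the free monoid on `Fin n`, together with the partial cyclic
derivatives `δ_j`, the number operator `N` and the cyclic symmetrization `C`. -/

noncomputable section

/-- `K⟨n⟩`, the ring of polynomials in `n` noncommuting indeterminates. -/
abbrev FreePoly (K : Type) [CommSemiring K] (n : ℕ) : Type :=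
  MonoidAlgebra K (FreeMonoid (Fin n))

/-- The monomial `X_{i_1} ⋯ X_{i_p}` associated to the word `w = [i_1,…,i_p]`. -/
def mono (K : Type) [Field K] {n : ℕ} (w : List (Fin n)) : FreePoly K n :=
  MonoidAlgebra.single (FreeMonoid.ofList w) 1

/-- The indeterminate `X k`. -/
def Xvar (K : Type) [Field K] {n : ℕ} (k : Fin n) : FreePoly K n := mono K [k]

variable {K : Type} [Field K] [CharZero K] {n : ℕ}

/-- The partial cyclic derivative `δ_j = μ̃ ∘ ∂_j`: on a monomial
`X_{i_0} ⋯ X_{i_s}` it gives `∑_{p : i_p = j} X_{i_{p+1}} ⋯ X_{i_s} X_{i_0} ⋯ X_{i_{p-1}}`. -/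
def cycDeriv (j : Fin n) : FreePoly K n →ₗ[K] FreePoly K n :=
  (Finsupp.lsum K fun w => LinearMap.toSpanSingleton K _
    (∑ p : Fin (FreeMonoid.toList w).length,
      if (FreeMonoid.toList w).get p = j then
        mono K ((FreeMonoid.toList w).drop (p + 1) ++ (FreeMonoid.toList w).take p)
      else 0)) ∘ₗ
    (MonoidAlgebra.coeffLinearEquiv K).toLinearMap

/-- The number operator `N`, multiplying a monomial by its degree. -/
def numOp : FreePoly K n →ₗ[K] FreePoly K n :=
  (Finsupp.lsum K fun w => LinearMap.toSpanSingleton K _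
    ((FreeMonoid.toList w).length • mono K (FreeMonoid.toList w))) ∘ₗ
    (MonoidAlgebra.coeffLinearEquiv K).toLinearMap

/-- The cyclic symmetrization `C`, sending a monomial of degree `p ≥ 1` to the
sum of its `p` cyclic rotations (and `1` to `0`). -/
def cycSym : FreePoly K n →ₗ[K] FreePoly K n :=
  (Finsupp.lsum K fun w => LinearMap.toSpanSingleton K _
    (∑ p ∈ Finset.range (FreeMonoid.toList w).length,
      mono K ((FreeMonoid.toList w).rotate (p + 1)))) ∘ₗ
    (MonoidAlgebra.coeffLinearEquiv K).toLinearMap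


lemma cycSym_mono (w : List (Fin n)) :
    cycSym (mono K w) =
      ∑ k ∈ Finset.range w.length, mono K (w.rotate (k + 1)) := by
  rw [cycSym, mono, LinearMap.comp_apply]
  erw [Finsupp.lsum_single]
  rw [LinearMap.toSpanSingleton_apply, one_smul]
  simp [mono]

theorem homogeneous_cycSym_eq_zero_mem_span_cyclic_differences
    (m : ℕ) (hm : 1 ≤ m) (p : FreePoly K n)
    (hhom : p ∈ Submodule.span K
      {x : FreePoly K n | ∃ w : List (Fin n), w.length = m ∧ x = mono K w})
    (h : cycSym p = 0) :
    p ∈ Submodule.span K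
      {x : FreePoly K n | ∃ w : List (Fin n), w.length = m ∧
        x = mono K w - mono K (w.rotate 1)} := by
  set S := Submodule.span K
      {x : FreePoly K n | ∃ w : List (Fin n), w.length = m ∧
        x = mono K w - mono K (w.rotate 1)} with hS
  have rot_mem : ∀ w : List (Fin n), w.length = m → ∀ k : ℕ,
      mono K w - mono K (w.rotate k) ∈ S := by
    intro w hw k
    induction k with
    | zero => simp
    | succ k ih =>
      have h1 : mono K w - mono K (w.rotate (k + 1)) =
          (mono K w - mono K (w.rotate k)) +
          (mono K (w.rotate k) - mono K ((w.rotate k).rotate 1)) := by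
        rw [List.rotate_rotate]
        abel
      rw [h1]
      exact S.add_mem ih (Submodule.subset_span ⟨w.rotate k, by simp [hw], rfl⟩)
  have key : ∀ q ∈ Submodule.span K
      {x : FreePoly K n | ∃ w : List (Fin n), w.length = m ∧ x = mono K w},
      cycSym q - (m : K) • q ∈ S := by
    intro q hq
    have : Submodule.span K
        {x : FreePoly K n | ∃ w : List (Fin n), w.length = m ∧ x = mono K w} ≤
        S.comap (cycSym - (m : K) • LinearMap.id) := by
      rw [Submodule.span_le]
      rintro x ⟨w, hw, rfl⟩
      simp only [SetLike.mem_coe, Submodule.mem_comap, LinearMap.sub_apply, LinearMap.smul_apply,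
        LinearMap.id_apply]
      rw [cycSym_mono, hw]
      have hcast : (m : K) • mono K w = ∑ _k ∈ Finset.range m, mono K w := by
        rw [Finset.sum_const, Finset.card_range, ← Nat.cast_smul_eq_nsmul K]
      rw [hcast, ← Finset.sum_sub_distrib]
      refine S.sum_mem fun k _ => ?_
      have := rot_mem w hw (k + 1)
      have h2 : mono K (w.rotate (k + 1)) - mono K w =
          -(mono K w - mono K (w.rotate (k + 1))) := by abel
      rw [h2]
      exact S.neg_mem this
    have := this hq
    simpa using this
  have hmp : (m : K) • p ∈ S := by
    have := key p hhom
    rw [h] at this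
    have h3 : (m : K) • p = -(0 - (m : K) • p) := by abel
    rw [h3]
    exact S.neg_mem this
  have hm0 : (m : K) ≠ 0 := by
    exact_mod_cast Nat.cast_ne_zero.mpr (by omega)
  have : p = (m : K)⁻¹ • ((m : K) • p) := by
    rw [smul_smul, inv_mul_cancel₀ hm0, one_smul]
  rw [this]
  exact S.smul_mem _ hmp
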